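/- arXiv:1506.03773 — 2 statements merged into one kernel-verified Lean document; each statement's English description precedes it below -/
import Mathlib

section
/- Almost surely there exists a random constant C > 0 such that for every ξ = u(cos θ, sin θ) ∈ ℝ² ∖ {0} with θ ∈ H_u, one has |∫_T^1 Z_t dt| ≤ C |ξ|^{-1/2}, where T = T_ω(ξ) is the associated random time. -/
noncomputable section

open MeasureTheory ProbabilityTheory Real Filter Set intervalIntegral
open scoped Topology

/-- The threshold angle `θ_u = min{u^{-1/2}, π/4}`. -/
def thetaU (u : ℝ) : ℝ := min (u ^ (-(1 : ℝ) / 2)) (π / 4)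

/-- The horizontal angles `H_u = [0, θ_u] ∪ [π − θ_u, π + θ_u] ∪ [2π − θ_u, 2π)`. -/
def Hset (u : ℝ) : Set ℝ :=
  Icc 0 (thetaU u) ∪ Icc (π - thetaU u) (π + thetaU u) ∪ Ico (2 * π - thetaU u) (2 * π)

/-- The Itô drift-diffusion process `X_t = −2πu(t cos θ + W_t sin θ)`. -/
def Xproc {Ω : Type*} (W : ℝ → Ω → ℝ) (u θ : ℝ) (ω : Ω) (t : ℝ) : ℝ :=
  -(2 * π * u) * (t * Real.cos θ + W t ω * Real.sin θ)

/-- The target value `−2π⌈u(cos θ + W₁ sin θ)⌉` if `X₁ ≥ 0`, and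
`−2π⌊u(cos θ + W₁ sin θ)⌋` if `X₁ < 0`. -/
def targ {Ω : Type*} (W : ℝ → Ω → ℝ) (u θ : ℝ) (ω : Ω) : ℝ :=
  if 0 ≤ Xproc W u θ ω 1
  then -(2 * π) * (⌈u * (Real.cos θ + W 1 ω * Real.sin θ)⌉ : ℝ)
  else -(2 * π) * (⌊u * (Real.cos θ + W 1 ω * Real.sin θ)⌋ : ℝ)

/-- The random time `T = T_ω(ξ)`: the minimal `t ∈ [0,1]` with `X_t` equal to the
target value (realised as an infimum, which is attained for a.e. `ω` by continuity). -/
def Ttime {Ω : Type*} (W : ℝ → Ω → ℝ) (u θ : ℝ) (ω : Ω) : ℝ :=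
  sInf {t | t ∈ Icc (0 : ℝ) 1 ∧ Xproc W u θ ω t = targ W u θ ω}

/-- For `θ ∈ H_u`, `|sin θ| ≤ θ_u` and `|cos θ| ≥ 1/2`. -/
lemma sin_cos_bound_of_Hset {u θ : ℝ} (hθ : θ ∈ Hset u) :
    |Real.sin θ| ≤ thetaU u ∧ 1 / 2 ≤ |Real.cos θ| := by
  have hπ := Real.pi_pos
  have hc4 : thetaU u ≤ π / 4 := min_le_right _ _
  have key : ∀ φ : ℝ, |φ| ≤ thetaU u → |Real.sin φ| ≤ thetaU u ∧ 1 / 2 ≤ Real.cos φ := by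
    intro φ hφ
    refine ⟨le_trans Real.abs_sin_le_abs hφ, ?_⟩
    have h1 : Real.cos (π / 4) ≤ Real.cos |φ| :=
      Real.cos_le_cos_of_nonneg_of_le_pi (abs_nonneg φ) (by linarith) (le_trans hφ hc4)
    have h2 : (1 : ℝ) ≤ Real.sqrt 2 := by
      rw [show (1 : ℝ) = Real.sqrt 1 from Real.sqrt_one.symm]
      exact Real.sqrt_le_sqrt (by norm_num)
    rw [Real.cos_pi_div_four] at h1
    rw [← Real.cos_abs φ]
    linarith
  rcases hθ with (h | h) | h
  · have hk := key θ (by rw [abs_of_nonneg h.1]; exact h.2)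
    exact ⟨hk.1, le_trans hk.2 (le_abs_self _)⟩
  · have hφ : |π - θ| ≤ thetaU u := abs_le.mpr ⟨by linarith [h.2], by linarith [h.1]⟩
    have hk := key _ hφ
    constructor
    · rw [← Real.sin_pi_sub]; exact hk.1
    · calc (1 : ℝ) / 2 ≤ Real.cos (π - θ) := hk.2
        _ ≤ |Real.cos (π - θ)| := le_abs_self _
        _ = |Real.cos θ| := by rw [Real.cos_pi_sub, abs_neg]
  · have hφ : |2 * π - θ| ≤ thetaU u := abs_le.mpr ⟨by linarith [h.1, h.2], by linarith [h.1]⟩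
    have hk := key _ hφ
    constructor
    · calc |Real.sin θ| = |Real.sin (2 * π - θ)| := by rw [Real.sin_two_pi_sub, abs_neg]
        _ ≤ thetaU u := hk.1
    · calc (1 : ℝ) / 2 ≤ Real.cos (2 * π - θ) := hk.2
        _ ≤ |Real.cos (2 * π - θ)| := le_abs_self _
        _ = |Real.cos θ| := by rw [Real.cos_two_pi_sub]

/-- Almost surely there is a random constant `C > 0` such that for every
`ξ = u(cos θ, sin θ) ∈ ℝ² ∖ {0}` with `θ ∈ H_u` one has `|∫_T^1 Z_t dt| ≤ C|ξ|^{-1/2}`,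
where `Z_t = exp(i X_t)` and `T = T_ω(ξ)`. -/
theorem stmt9 {Ω : Type*} [MeasurableSpace Ω] (P : Measure Ω) [IsProbabilityMeasure P]
    (W : ℝ → Ω → ℝ)
    (hW0 : ∀ ω, W 0 ω = 0)
    (hWmeas : ∀ t, Measurable (W t))
    (hWcont : ∀ᵐ ω ∂P, ContinuousOn (fun t => W t ω) (Set.Ici 0))
    (hWindep : ∀ (n : ℕ) (t : Fin (n + 1) → ℝ), Monotone t → (∀ i, 0 ≤ t i) →
      iIndepFun
        (fun i : Fin n => fun ω => W (t i.succ) ω - W (t i.castSucc) ω) P)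
    (hWgauss : ∀ s t : ℝ, 0 ≤ s → s ≤ t →
      Measure.map (fun ω => W t ω - W s ω) P = gaussianReal 0 (Real.toNNReal (t - s))) :
    ∀ᵐ ω ∂P, ∃ C : ℝ, 0 < C ∧ ∀ u θ : ℝ, 0 < u → θ ∈ Hset u →
      ‖∫ t in (Ttime W u θ ω)..1, Complex.exp (Complex.I * (Xproc W u θ ω t : ℂ))‖ ≤
        C * u ^ (-(1 : ℝ) / 2) := by
  have hπ := Real.pi_pos
  filter_upwards [hWcont] with ω hcont
  have hWc : ContinuousOn (fun t => W t ω) (Icc (0 : ℝ) 1) :=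
    hcont.mono (fun x hx => hx.1)
  obtain ⟨M0, hM0⟩ := isCompact_Icc.exists_bound_of_continuousOn hWc
  set M := max M0 0 with hMdef
  have hM : ∀ t ∈ Icc (0 : ℝ) 1, |W t ω| ≤ M := fun t ht =>
    le_trans (hM0 t ht) (le_max_left _ _)
  have hMnn : (0 : ℝ) ≤ M := le_max_right _ _
  refine ⟨3 + 4 * M, by positivity, ?_⟩
  intro u θ hu hθ
  obtain ⟨hsin, hcos⟩ := sin_cos_bound_of_Hset hθ
  set r := u ^ (-(1 : ℝ) / 2) with hr
  set s := u ^ ((1 : ℝ) / 2) with hs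
  have hrpos : 0 < r := Real.rpow_pos_of_pos hu _
  have hspos : 0 < s := Real.rpow_pos_of_pos hu _
  have hur : u * r = s := by
    have h := (Real.rpow_add hu 1 (-(1 : ℝ) / 2)).symm
    rw [Real.rpow_one] at h
    rw [hr, hs, h]
    norm_num
  have hθur : thetaU u ≤ r := min_le_left _ _
  -- continuity of X
  have hXc : ContinuousOn (Xproc W u θ ω) (Icc (0 : ℝ) 1) := by
    unfold Xproc
    exact continuousOn_const.mul
      ((continuousOn_id.mul continuousOn_const).add (hWc.mul continuousOn_const))
  have hX0 : Xproc W u θ ω 0 = 0 := by simp [Xproc, hW0 ω]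
  set v := u * (Real.cos θ + W 1 ω * Real.sin θ) with hv
  have hX1 : Xproc W u θ ω 1 = -(2 * π) * v := by
    rw [hv]; unfold Xproc; ring
  -- targ lies between X 0 = 0 and X 1, and is within 2π of X 1
  have hbetween : targ W u θ ω ∈ uIcc (Xproc W u θ ω 0) (Xproc W u θ ω 1) ∧
      |Xproc W u θ ω 1 - targ W u θ ω| ≤ 2 * π := by
    rw [hX0]
    rcases le_or_gt 0 (Xproc W u θ ω 1) with hpos | hneg
    · have htd : targ W u θ ω = -(2 * π) * (⌈v⌉ : ℝ) := by
        unfold targ; rw [if_pos hpos, ← hv]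
      have hpos' : 0 ≤ -(2 * π) * v := by rw [← hX1]; exact hpos
      have hv0 : v ≤ 0 := by
        rcases le_or_gt v 0 with h' | h'
        · exact h'
        · exact absurd hpos' (by nlinarith [mul_pos hπ h'])
      have hceil : (⌈v⌉ : ℝ) ≤ 0 := by
        exact_mod_cast Int.ceil_le.mpr (by exact_mod_cast hv0)
      have hlec : v ≤ (⌈v⌉ : ℝ) := Int.le_ceil v
      have hcl1 : (⌈v⌉ : ℝ) < v + 1 := Int.ceil_lt_add_one v
      have p1 : π * (⌈v⌉ : ℝ) ≤ 0 := mul_nonpos_iff.mpr (Or.inl ⟨hπ.le, hceil⟩)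
      have p2 : π * v ≤ π * (⌈v⌉ : ℝ) := mul_le_mul_of_nonneg_left hlec hπ.le
      have p3 : π * (⌈v⌉ : ℝ) ≤ π * (v + 1) := mul_le_mul_of_nonneg_left hcl1.le hπ.le
      constructor
      · refine Set.mem_uIcc.mpr (Or.inl ⟨by rw [htd]; linarith, ?_⟩)
        rw [htd, hX1]; linarith
      · rw [htd, hX1, abs_le]
        constructor <;> [linarith; linarith]
    · have htd : targ W u θ ω = -(2 * π) * (⌊v⌋ : ℝ) := by
        unfold targ; rw [if_neg (not_le.mpr hneg), ← hv]
      have hneg' : -(2 * π) * v < 0 := by rw [← hX1]; exact hneg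
      have hv0 : 0 ≤ v := by
        rcases le_or_gt 0 v with h' | h'
        · exact h'
        · exact absurd hneg' (by nlinarith [mul_pos hπ (neg_pos.mpr h')])
      have hfl : (0 : ℝ) ≤ (⌊v⌋ : ℝ) := by exact_mod_cast Int.floor_nonneg.mpr hv0
      have hlef : (⌊v⌋ : ℝ) ≤ v := Int.floor_le v
      have hfl1 : v - 1 < (⌊v⌋ : ℝ) := Int.sub_one_lt_floor v
      have p1 : 0 ≤ π * (⌊v⌋ : ℝ) := mul_nonneg hπ.le hfl
      have p2 : π * (⌊v⌋ : ℝ) ≤ π * v := mul_le_mul_of_nonneg_left hlef hπ.le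
      have p3 : π * (v - 1) ≤ π * (⌊v⌋ : ℝ) := mul_le_mul_of_nonneg_left hfl1.le hπ.le
      constructor
      · refine Set.mem_uIcc.mpr (Or.inr ⟨?_, by rw [htd]; linarith⟩)
        rw [htd, hX1]; linarith
      · rw [htd, hX1, abs_le]
        constructor <;> [linarith; linarith]
  -- the hitting set
  set S := {t | t ∈ Icc (0 : ℝ) 1 ∧ Xproc W u θ ω t = targ W u θ ω} with hSdef
  have hSne : S.Nonempty := by
    have hXc' : ContinuousOn (Xproc W u θ ω) (uIcc (0 : ℝ) 1) := by
      rwa [Set.uIcc_of_le zero_le_one]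
    obtain ⟨t, ht, hXt⟩ := intermediate_value_uIcc hXc' hbetween.1
    exact ⟨t, by rwa [Set.uIcc_of_le zero_le_one] at ht, hXt⟩
  have hSbdd : BddBelow S := ⟨0, fun t ht => ht.1.1⟩
  have hSclosed : IsClosed S := by
    have hSeq : S = Icc (0 : ℝ) 1 ∩ (Xproc W u θ ω) ⁻¹' {targ W u θ ω} := by
      ext t; simp [hSdef]
    rw [hSeq]
    exact hXc.preimage_isClosed_of_isClosed isClosed_Icc isClosed_singleton
  have hTmem : Ttime W u θ ω ∈ S := hSclosed.csInf_mem hSne hSbdd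
  set T := Ttime W u θ ω with hT
  have hT0 : 0 ≤ T := hTmem.1.1
  have hT1 : T ≤ 1 := hTmem.1.2
  have hXT : Xproc W u θ ω T = targ W u θ ω := hTmem.2
  -- integral bound by length
  have hint : ‖∫ t in T..1, Complex.exp (Complex.I * (Xproc W u θ ω t : ℂ))‖ ≤ 1 * |1 - T| := by
    refine intervalIntegral.norm_integral_le_of_norm_le_const (fun x _ => ?_)
    rw [Complex.norm_exp]
    simp [Complex.mul_re]
  have hlen : ‖∫ t in T..1, Complex.exp (Complex.I * (Xproc W u θ ω t : ℂ))‖ ≤ 1 - T := by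
    calc ‖∫ t in T..1, Complex.exp (Complex.I * (Xproc W u θ ω t : ℂ))‖ ≤ 1 * |1 - T| := hint
      _ = 1 - T := by rw [one_mul, abs_of_nonneg (by linarith)]
  -- the drift estimate
  have hAeq : (2 * π * u * Real.cos θ) * (1 - T) =
      (targ W u θ ω - Xproc W u θ ω 1) - (2 * π * u * Real.sin θ) * (W 1 ω - W T ω) := by
    rw [← hXT]; unfold Xproc; ring
  have hWT : |W T ω| ≤ M := hM T hTmem.1
  have hW1 : |W 1 ω| ≤ M := hM 1 (by norm_num)
  have hdW : |W 1 ω - W T ω| ≤ 2 * M := by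
    calc |W 1 ω - W T ω| ≤ |W 1 ω| + |W T ω| := abs_sub _ _
      _ ≤ 2 * M := by linarith
  have hBabs : |2 * π * u * Real.sin θ| ≤ 2 * π * s := by
    rw [abs_mul, abs_of_nonneg (by positivity : (0:ℝ) ≤ 2 * π * u)]
    calc 2 * π * u * |Real.sin θ| ≤ 2 * π * u * r :=
          mul_le_mul_of_nonneg_left (le_trans hsin hθur) (by positivity)
      _ = 2 * π * s := by rw [mul_assoc, hur]
  have hkey : π * u * (1 - T) ≤ 2 * π + 4 * π * M * s := by
    have h1 : π * u * (1 - T) ≤ |2 * π * u * Real.cos θ| * (1 - T) := by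
      have hA : π * u ≤ |2 * π * u * Real.cos θ| := by
        rw [abs_mul, abs_of_nonneg (by positivity : (0:ℝ) ≤ 2 * π * u)]
        have := mul_le_mul_of_nonneg_left hcos (by positivity : (0:ℝ) ≤ 2 * π * u)
        linarith
      exact mul_le_mul_of_nonneg_right hA (by linarith)
    have h2 : |(2 * π * u * Real.cos θ) * (1 - T)| = |2 * π * u * Real.cos θ| * (1 - T) := by
      rw [abs_mul, abs_of_nonneg (by linarith : (0:ℝ) ≤ 1 - T)]
    have h3 : |(2 * π * u * Real.cos θ) * (1 - T)| ≤
        |Xproc W u θ ω 1 - targ W u θ ω| + |2 * π * u * Real.sin θ| * |W 1 ω - W T ω| := by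
      rw [hAeq]
      calc |(targ W u θ ω - Xproc W u θ ω 1) - (2 * π * u * Real.sin θ) * (W 1 ω - W T ω)|
          ≤ |targ W u θ ω - Xproc W u θ ω 1| + |(2 * π * u * Real.sin θ) * (W 1 ω - W T ω)| :=
            abs_sub _ _
        _ = |Xproc W u θ ω 1 - targ W u θ ω| + |2 * π * u * Real.sin θ| * |W 1 ω - W T ω| := by
            rw [abs_sub_comm, abs_mul]
    have h4 : |2 * π * u * Real.sin θ| * |W 1 ω - W T ω| ≤ (2 * π * s) * (2 * M) :=
      mul_le_mul hBabs hdW (abs_nonneg _) (by positivity)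
    have h5 := hbetween.2
    calc π * u * (1 - T) ≤ |(2 * π * u * Real.cos θ) * (1 - T)| := by rw [h2]; exact h1
      _ ≤ |Xproc W u θ ω 1 - targ W u θ ω| + |2 * π * u * Real.sin θ| * |W 1 ω - W T ω| := h3
      _ ≤ 2 * π + (2 * π * s) * (2 * M) := by linarith
      _ = 2 * π + 4 * π * M * s := by ring
  -- conclude
  rcases le_or_gt 1 u with hu1 | hu1
  · have hs1 : (1 : ℝ) ≤ s := by
      have h := Real.rpow_le_rpow (by norm_num) hu1 (by norm_num : (0:ℝ) ≤ 1 / 2)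
      rwa [Real.one_rpow] at h
    have hgoal : 1 - T ≤ (3 + 4 * M) * r := by
      have hπu : (0 : ℝ) < π * u := by positivity
      have hfin : π * u * (1 - T) ≤ π * u * ((3 + 4 * M) * r) := by
        calc π * u * (1 - T) ≤ 2 * π + 4 * π * M * s := hkey
          _ ≤ 3 * π * s + 4 * π * M * s := by
              have := mul_le_mul_of_nonneg_left hs1 hπ.le
              linarith
          _ = π * u * ((3 + 4 * M) * r) := by rw [show π * u * ((3 + 4 * M) * r) =
                (3 + 4 * M) * π * (u * r) by ring, hur]; ring
      exact le_of_mul_le_mul_left hfin hπu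
    exact le_trans hlen hgoal
  · have hr1 : (1 : ℝ) ≤ r :=
      Real.one_le_rpow_of_pos_of_le_one_of_nonpos hu hu1.le (by norm_num)
    calc ‖∫ t in T..1, Complex.exp (Complex.I * (Xproc W u θ ω t : ℂ))‖ ≤ 1 - T := hlen
      _ ≤ 1 := by linarith
      _ ≤ (3 + 4 * M) * r := by
          have h1 : (1:ℝ) * 1 ≤ (3 + 4 * M) * r :=
            mul_le_mul (by linarith) hr1 zero_le_one (by linarith)
          linarith
end
end

section
/- Let (r_N)_{N∈ℕ} be a sequence of positive reals such that Σ_{N=1}^∞ r_N/N < ∞. Then there exists a strictly increasing sequence of indices N_j → ∞ such that Σ_{j=1}^∞ r_{N_j} < ∞ and N_{j+1}/N_j → 1 as j → ∞. -/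
noncomputable section

open Filter
open scoped Topology

/-- If `(r_N)` is a sequence of positive reals with `Σ_{N=1}^∞ r_N/N < ∞`, then there is
a strictly increasing sequence of indices `N_j → ∞` with `Σ_j r_{N_j} < ∞` and
`N_{j+1}/N_j → 1`. -/
theorem stmt17 (r : ℕ → ℝ) (hr : ∀ N : ℕ, 1 ≤ N → 0 < r N)
    (hsum : Summable fun N : ℕ => r (N + 1) / (N + 1 : ℝ)) :
    ∃ Nj : ℕ → ℕ, StrictMono Nj ∧ (∀ j, 1 ≤ Nj j) ∧
      (Summable fun j => r (Nj j)) ∧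
      Tendsto (fun j => (Nj (j + 1) : ℝ) / (Nj j : ℝ)) atTop (𝓝 1) := by
  classical
  set F : ℕ → ℝ := fun N => r (N + 1) / (N + 1 : ℝ) with hFdef
  have hFpos : ∀ n, 0 < F n := fun n => div_pos (hr (n + 1) (by omega)) (by positivity)
  -- tails
  set t : ℕ → ℝ := fun i => ∑' k, F (k + i) with htdef
  have hts : ∀ i, Summable fun k => F (k + i) := fun i => (summable_nat_add_iff i).mpr hsum
  have htpos : ∀ i, 0 < t i := fun i => Summable.tsum_pos (hts i) (fun k => (hFpos _).le) 0 (hFpos _)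
  have htrec : ∀ i, t i = F i + t (i + 1) := by
    intro i
    have h0 := Summable.tsum_eq_zero_add (hts i)
    rw [htdef]
    simp only at h0 ⊢
    rw [h0, zero_add]
    congr 1
    apply tsum_congr
    intro k
    congr 1
    omega
  have htanti : Antitone t := antitone_nat_of_succ_le fun n => by
    have h := htrec n
    have := hFpos n
    linarith
  have ht0 : Tendsto t atTop (𝓝 0) := tendsto_sum_nat_add F
  -- weight function
  set c : ℕ → ℕ := fun n => ⌈1 / Real.sqrt (t (n - 1))⌉₊ with hcdef
  have hcmono : Monotone c := by
    intro n m hnm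
    apply Nat.ceil_le_ceil
    apply one_div_le_one_div_of_le
    · exact Real.sqrt_pos.mpr (htpos _)
    · exact Real.sqrt_le_sqrt (htanti (by omega))
  set w : ℕ → ℕ := fun n => max 1 (min n (c n)) with hwdef
  have hw1 : ∀ n, 1 ≤ w n := fun n => le_max_left _ _
  have hwle : ∀ n, 1 ≤ n → w n ≤ n := fun n hn => max_le hn (min_le_left _ _)
  have hwmono : Monotone w := fun n m hnm =>
    max_le_max le_rfl (min_le_min hnm (hcmono hnm))
  -- block endpoints
  set a : ℕ → ℕ := fun j => Nat.rec 1 (fun _ p => p + p / w p) j with hadef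
  have ha0 : a 0 = 1 := rfl
  have haS : ∀ j, a (j + 1) = a j + a j / w (a j) := fun j => rfl
  have hapos : ∀ j, 1 ≤ a j := by
    intro j
    induction j with
    | zero => exact le_refl 1
    | succ j ih => exact le_trans ih ((haS j) ▸ Nat.le_add_right _ _)
  clear_value a
  clear hadef
  have hLpos : ∀ j, 1 ≤ a j / w (a j) := fun j =>
    (Nat.one_le_div_iff (lt_of_lt_of_le Nat.zero_lt_one (hw1 _))).mpr (hwle _ (hapos j))
  have hamono : StrictMono a := strictMono_nat_of_lt_succ fun j =>
    (haS j) ▸ Nat.lt_add_of_pos_right (hLpos j)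
  -- argmin choice
  have hblock : ∀ j : ℕ, ∃ N ∈ Finset.Ico (a j) (a (j + 1)),
      ∀ M ∈ Finset.Ico (a j) (a (j + 1)), r N ≤ r M := by
    intro j
    apply Finset.exists_min_image
    rw [Finset.nonempty_Ico]
    exact hamono (lt_add_one j)
  choose Nj hNmem hNmin using hblock
  have hNlb : ∀ j, a j ≤ Nj j := fun j => (Finset.mem_Ico.mp (hNmem j)).1
  have hNub : ∀ j, Nj j < a (j + 1) := fun j => (Finset.mem_Ico.mp (hNmem j)).2
  have hN1 : ∀ j, 1 ≤ Nj j := fun j => le_trans (hapos j) (hNlb j)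
  have hNmonot : StrictMono Nj := strictMono_nat_of_lt_succ fun j =>
    lt_of_lt_of_le (hNub j) (hNlb (j + 1))
  refine ⟨Nj, hNmonot, hN1, ?_, ?_⟩
  · -- Summability
    set S : ℕ → ℝ := fun j => ∑ M ∈ Finset.Ico (a j) (a (j + 1)), r M / M with hSdef
    have hterm_nonneg : ∀ M : ℕ, 1 ≤ M → 0 ≤ r M / M := fun M hM =>
      div_nonneg (hr M hM).le (by positivity)
    have hSnonneg : ∀ j, 0 ≤ S j := by
      intro j
      apply Finset.sum_nonneg
      intro M hM
      exact hterm_nonneg M (le_trans (hapos j) (Finset.mem_Ico.mp hM).1)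
    have hkey : ∀ j, r (Nj j) ≤ 3 * (w (a j) : ℝ) * S j := by
      intro j
      have hwpos : 0 < w (a j) := lt_of_lt_of_le Nat.zero_lt_one (hw1 (a j))
      have hLpos' : 1 ≤ a j / w (a j) := hLpos j
      have hB : a (j + 1) = a j + a j / w (a j) := haS j
      have hB3 : a (j + 1) ≤ 3 * w (a j) * (a j / w (a j)) := by
        have h1 := Nat.div_add_mod (a j) (w (a j))
        have h2 := Nat.mod_lt (a j) hwpos
        rw [hB]
        nlinarith [hLpos', hwpos]
      have h1 : ((a j / w (a j) : ℕ) : ℝ) * r (Nj j) ≤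
          ∑ M ∈ Finset.Ico (a j) (a (j + 1)), r M := by
        have hcard : (Finset.Ico (a j) (a (j + 1))).card = a j / w (a j) := by
          rw [Nat.card_Ico, hB]; omega
        calc ((a j / w (a j) : ℕ) : ℝ) * r (Nj j)
            = ∑ _M ∈ Finset.Ico (a j) (a (j + 1)), r (Nj j) := by
              rw [Finset.sum_const, hcard, nsmul_eq_mul]
          _ ≤ ∑ M ∈ Finset.Ico (a j) (a (j + 1)), r M :=
              Finset.sum_le_sum (hNmin j)
      have h2 : ∑ M ∈ Finset.Ico (a j) (a (j + 1)), r M ≤ ((a (j + 1) : ℕ) : ℝ) * S j := by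
        rw [hSdef]
        simp only
        rw [Finset.mul_sum]
        apply Finset.sum_le_sum
        intro M hM
        obtain ⟨hM1, hM2⟩ := Finset.mem_Ico.mp hM
        have hM0 : (0:ℝ) < (M:ℝ) := by
          have : 1 ≤ M := le_trans (hapos j) hM1
          exact_mod_cast this
        have hrw : r M = (M : ℝ) * (r M / M) := by field_simp
        calc r M = (M : ℝ) * (r M / M) := hrw
          _ ≤ ((a (j + 1) : ℕ) : ℝ) * (r M / M) :=
              mul_le_mul_of_nonneg_right (by exact_mod_cast hM2.le)
                (hterm_nonneg M (le_trans (hapos j) hM1))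
      have h3 : ((a j / w (a j) : ℕ) : ℝ) * r (Nj j) ≤
          ((a j / w (a j) : ℕ) : ℝ) * (3 * (w (a j) : ℝ) * S j) := by
        calc ((a j / w (a j) : ℕ) : ℝ) * r (Nj j)
            ≤ ((a (j + 1) : ℕ) : ℝ) * S j := le_trans h1 h2
          _ ≤ ((3 * w (a j) * (a j / w (a j)) : ℕ) : ℝ) * S j := by
              apply mul_le_mul_of_nonneg_right _ (hSnonneg j)
              exact_mod_cast hB3
          _ = ((a j / w (a j) : ℕ) : ℝ) * (3 * (w (a j) : ℝ) * S j) := by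
              push_cast; ring
      exact le_of_mul_le_mul_left h3 (by exact_mod_cast hLpos')
    -- bound 3 w(a j) S j by sum of weighted terms
    have hstep : ∀ j, 3 * (w (a j) : ℝ) * S j ≤
        3 * ∑ M ∈ Finset.Ico (a j) (a (j + 1)), (w M : ℝ) * (r M / M) := by
      intro j
      rw [hSdef, Finset.mul_sum, Finset.mul_sum]
      apply Finset.sum_le_sum
      intro M hM
      obtain ⟨hM1, _⟩ := Finset.mem_Ico.mp hM
      have hwm : (w (a j) : ℝ) ≤ (w M : ℝ) := by exact_mod_cast hwmono hM1
      have hnn := hterm_nonneg M (le_trans (hapos j) hM1)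
      calc 3 * (w (a j) : ℝ) * (r M / M) ≤ 3 * (w M : ℝ) * (r M / M) := by nlinarith
        _ = 3 * ((w M : ℝ) * (r M / M)) := by ring
    -- partial sums of weighted terms are bounded
    set C : ℝ := 2 * (∑' n, F n) + 2 * Real.sqrt (t 0) with hCdef
    have hGbound : ∀ n : ℕ, (w (n + 1) : ℝ) * F n ≤
        2 * F n + 2 * (Real.sqrt (t n) - Real.sqrt (t (n + 1))) := by
      intro n
      have hc1 : w (n + 1) ≤ c (n + 1) := by
        have : 1 ≤ c (n + 1) := by
          rw [hcdef]
          simp only [Nat.one_le_ceil_iff]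
          exact one_div_pos.mpr (Real.sqrt_pos.mpr (htpos _))
        rw [hwdef]
        simp only
        omega
      have hcn : c (n + 1) = ⌈1 / Real.sqrt (t n)⌉₊ := by
        rw [hcdef]; simp
      have hcast : (c (n + 1) : ℝ) < 1 / Real.sqrt (t n) + 1 := by
        rw [hcn]
        exact Nat.ceil_lt_add_one (by positivity)
      have hwcast : (w (n + 1) : ℝ) ≤ 1 / Real.sqrt (t n) + 1 := by
        have : (w (n + 1) : ℝ) ≤ (c (n + 1) : ℝ) := by exact_mod_cast hc1
        linarith
      have hFn := hFpos n
      have h4 : (w (n + 1) : ℝ) * F n ≤ F n / Real.sqrt (t n) + F n := by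
        have := mul_le_mul_of_nonneg_right hwcast hFn.le
        calc (w (n + 1) : ℝ) * F n ≤ (1 / Real.sqrt (t n) + 1) * F n := this
          _ = F n / Real.sqrt (t n) + F n := by ring
      have h5 : F n / Real.sqrt (t n) ≤
          2 * (Real.sqrt (t n) - Real.sqrt (t (n + 1))) := by
        have hab : F n = t n - t (n + 1) := by have := htrec n; linarith
        have hb : 0 < t (n + 1) := htpos (n + 1)
        have hba : t (n + 1) ≤ t n := htanti (Nat.le_succ n)
        set sa := Real.sqrt (t n) with hsa
        set sb := Real.sqrt (t (n + 1)) with hsb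
        have hsa2 : sa ^ 2 = t n := Real.sq_sqrt (htpos n).le
        have hsb2 : sb ^ 2 = t (n + 1) := Real.sq_sqrt hb.le
        have hsapos : 0 < sa := Real.sqrt_pos.mpr (htpos n)
        have hsbpos : 0 < sb := Real.sqrt_pos.mpr hb
        rw [div_le_iff₀ hsapos, hab]
        nlinarith [sq_nonneg (sa - sb)]
      linarith
    have hCsum : ∀ n : ℕ, ∑ k ∈ Finset.range n, (w (k + 1) : ℝ) * F k ≤ C := by
      intro n
      have htel : ∑ k ∈ Finset.range n,
          (Real.sqrt (t k) - Real.sqrt (t (k + 1))) = Real.sqrt (t 0) - Real.sqrt (t n) :=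
        Finset.sum_range_sub' (fun k => Real.sqrt (t k)) n
      calc ∑ k ∈ Finset.range n, (w (k + 1) : ℝ) * F k
          ≤ ∑ k ∈ Finset.range n,
            (2 * F k + 2 * (Real.sqrt (t k) - Real.sqrt (t (k + 1)))) :=
            Finset.sum_le_sum fun k _ => hGbound k
        _ = 2 * (∑ k ∈ Finset.range n, F k) +
            2 * (Real.sqrt (t 0) - Real.sqrt (t n)) := by
            rw [Finset.sum_add_distrib, ← Finset.mul_sum, ← Finset.mul_sum, htel]
        _ ≤ C := by
            rw [hCdef]
            have h6 : ∑ k ∈ Finset.range n, F k ≤ ∑' k, F k :=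
              Summable.sum_le_tsum (Finset.range n) (fun k _ => (hFpos k).le) hsum
            have h7 : 0 ≤ Real.sqrt (t n) := Real.sqrt_nonneg _
            linarith
    -- merging blocks
    have hmerge : ∀ J : ℕ, ∑ j ∈ Finset.range J,
        ∑ M ∈ Finset.Ico (a j) (a (j + 1)), (w M : ℝ) * (r M / M) =
        ∑ M ∈ Finset.Ico (a 0) (a J), (w M : ℝ) * (r M / M) := by
      intro J
      induction J with
      | zero => simp
      | succ J ih =>
        rw [Finset.sum_range_succ, ih,
          Finset.sum_Ico_consecutive _ (hamono.monotone (Nat.zero_le J))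
            (hamono.monotone (Nat.le_succ J))]
    have hIco : ∀ J : ℕ, ∑ M ∈ Finset.Ico (a 0) (a J), (w M : ℝ) * (r M / M) ≤ C := by
      intro J
      rw [ha0, Finset.sum_Ico_eq_sum_range]
      calc ∑ k ∈ Finset.range (a J - 1), (w (1 + k) : ℝ) * (r (1 + k) / (1 + k : ℕ))
          = ∑ k ∈ Finset.range (a J - 1), (w (k + 1) : ℝ) * F k := by
            apply Finset.sum_congr rfl
            intro k _
            have h1k : 1 + k = k + 1 := by omega
            rw [h1k, hFdef]
            push_cast
            ring_nf
        _ ≤ C := hCsum _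
    apply summable_of_sum_range_le (c := 3 * C)
    · intro j
      exact (hr _ (hN1 j)).le
    · intro J
      calc ∑ j ∈ Finset.range J, r (Nj j)
          ≤ ∑ j ∈ Finset.range J, 3 * (w (a j) : ℝ) * S j :=
            Finset.sum_le_sum fun j _ => hkey j
        _ ≤ ∑ j ∈ Finset.range J,
            3 * ∑ M ∈ Finset.Ico (a j) (a (j + 1)), (w M : ℝ) * (r M / M) :=
            Finset.sum_le_sum fun j _ => hstep j
        _ = 3 * ∑ j ∈ Finset.range J,
            ∑ M ∈ Finset.Ico (a j) (a (j + 1)), (w M : ℝ) * (r M / M) := by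
            rw [Finset.mul_sum]
        _ ≤ 3 * C := by
            have := (hmerge J) ▸ (hIco J)
            linarith
  · -- ratio tends to 1
    have haT : Tendsto a atTop atTop := hamono.tendsto_atTop
    have hcT : Tendsto c atTop atTop := by
      rw [tendsto_atTop]
      intro b
      have htn : Tendsto (fun n : ℕ => t (n - 1)) atTop (𝓝 0) :=
        ht0.comp (tendsto_sub_atTop_nat 1)
      have hsq : Tendsto (fun n : ℕ => Real.sqrt (t (n - 1))) atTop (𝓝[>] 0) := by
        rw [tendsto_nhdsWithin_iff]
        constructor
        · have := htn.sqrt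
          rwa [Real.sqrt_zero] at this
        · exact Eventually.of_forall fun n => Real.sqrt_pos.mpr (htpos _)
      have hinv : Tendsto (fun n : ℕ => 1 / Real.sqrt (t (n - 1))) atTop atTop := by
        simpa [one_div, Function.comp_def] using tendsto_inv_nhdsGT_zero.comp hsq
      have := (tendsto_atTop.mp hinv) (b : ℝ)
      filter_upwards [this] with n hn
      calc b = ⌈(b : ℝ)⌉₊ := by simp
        _ ≤ ⌈1 / Real.sqrt (t (n - 1))⌉₊ := Nat.ceil_le_ceil hn
    have hwT : Tendsto w atTop atTop := by
      rw [tendsto_atTop_atTop]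
      intro b
      obtain ⟨n1, hn1⟩ := (tendsto_atTop_atTop.mp hcT) b
      refine ⟨max b n1, fun n hn => ?_⟩
      have h1 : b ≤ n := le_trans (le_max_left _ _) hn
      have h2 : b ≤ c n := hn1 n (le_trans (le_max_right _ _) hn)
      calc b ≤ min n (c n) := le_min h1 h2
        _ ≤ w n := le_max_right _ _
    have hwa : Tendsto (fun j => (w (a j) : ℝ)) atTop atTop :=
      tendsto_natCast_atTop_atTop.comp (hwT.comp haT)
    have hδ : Tendsto (fun j => 1 / (w (a j) : ℝ)) atTop (𝓝 0) := by
      simpa [one_div, Pi.inv_def] using hwa.inv_tendsto_atTop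
    have harec : ∀ j, (a (j + 1) : ℝ) ≤ (a j : ℝ) * (1 + 1 / (w (a j) : ℝ)) := by
      intro j
      have hcd : ((a j / w (a j) : ℕ) : ℝ) ≤ (a j : ℝ) / (w (a j) : ℝ) :=
        Nat.cast_div_le
      have : (a (j + 1) : ℝ) = (a j : ℝ) + ((a j / w (a j) : ℕ) : ℝ) := by
        rw [haS]; push_cast; ring
      rw [this]
      have hw0 : (0:ℝ) < (w (a j) : ℝ) := by exact_mod_cast hw1 (a j)
      have : (a j : ℝ) * (1 + 1 / (w (a j) : ℝ)) =
          (a j : ℝ) + (a j : ℝ) / (w (a j) : ℝ) := by field_simp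
      rw [this]
      linarith
    have hup : ∀ j, (Nj (j + 1) : ℝ) / (Nj j : ℝ) ≤
        (1 + 1 / (w (a j) : ℝ)) * (1 + 1 / (w (a (j + 1)) : ℝ)) := by
      intro j
      have hd1 : (0:ℝ) < (w (a j) : ℝ) := by exact_mod_cast hw1 (a j)
      have hd2 : (0:ℝ) < (w (a (j + 1)) : ℝ) := by exact_mod_cast hw1 (a (j + 1))
      have haj : (0:ℝ) < (a j : ℝ) := by exact_mod_cast hapos j
      have hNj : (0:ℝ) < (Nj j : ℝ) := by exact_mod_cast hN1 j
      have h1 : (Nj (j + 1) : ℝ) ≤ (a (j + 2) : ℝ) := by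
        exact_mod_cast (hNub (j + 1)).le
      have h2 : (a j : ℝ) ≤ (Nj j : ℝ) := by exact_mod_cast hNlb j
      have h3 : (a (j + 2) : ℝ) ≤
          (a j : ℝ) * ((1 + 1 / (w (a j) : ℝ)) * (1 + 1 / (w (a (j + 1)) : ℝ))) := by
        have hA := harec j
        have hB := harec (j + 1)
        have hpos1 : (0:ℝ) ≤ 1 + 1 / (w (a (j + 1)) : ℝ) := by positivity
        calc (a (j + 2) : ℝ) ≤ (a (j + 1) : ℝ) * (1 + 1 / (w (a (j + 1)) : ℝ)) := hB
          _ ≤ ((a j : ℝ) * (1 + 1 / (w (a j) : ℝ))) * (1 + 1 / (w (a (j + 1)) : ℝ)) :=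
              mul_le_mul_of_nonneg_right hA hpos1
          _ = (a j : ℝ) * ((1 + 1 / (w (a j) : ℝ)) * (1 + 1 / (w (a (j + 1)) : ℝ))) := by
              ring
      calc (Nj (j + 1) : ℝ) / (Nj j : ℝ) ≤ (a (j + 2) : ℝ) / (a j : ℝ) :=
            div_le_div₀ (by positivity) h1 haj h2
        _ ≤ (1 + 1 / (w (a j) : ℝ)) * (1 + 1 / (w (a (j + 1)) : ℝ)) := by
            rw [div_le_iff₀ haj]
            linarith [h3]
    have hlo : ∀ j, (1:ℝ) ≤ (Nj (j + 1) : ℝ) / (Nj j : ℝ) := by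
      intro j
      have hNj : (0:ℝ) < (Nj j : ℝ) := by exact_mod_cast hN1 j
      rw [le_div_iff₀ hNj, one_mul]
      exact_mod_cast (hNmonot (lt_add_one j)).le
    have hbig : Tendsto (fun j => (1 + 1 / (w (a j) : ℝ)) *
        (1 + 1 / (w (a (j + 1)) : ℝ))) atTop (𝓝 1) := by
      have hδ' : Tendsto (fun j => 1 / (w (a (j + 1)) : ℝ)) atTop (𝓝 0) :=
        hδ.comp (tendsto_add_atTop_nat 1)
      have := (hδ.const_add 1).mul (hδ'.const_add 1)
      simpa using this
    exact tendsto_of_tendsto_of_tendsto_of_le_of_le tendsto_const_nhds hbig hlo hup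
end
end
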